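/- Let p ≥ 1 and α_1,…,α_p ∈ [0,1] with α_p > 0, and suppose the greatest common divisor of the set {i ∈ {1,…,p} : α_i > 0} equals 1. Then the associated p×p companion matrix A is primitive: there exists k ∈ ℕ such that every entry of A^k is strictly positive. -/

import Mathlib

open Matrix

noncomputable section

/-- The companion matrix with first row `(α_1, …, α_p)` and subdiagonal entries `1`. -/
def companion (p : ℕ) (α : Fin p → ℝ) : Matrix (Fin p) (Fin p) ℝ :=
  Matrix.of fun i j => if (i : ℕ) = 0 then α j else if (i : ℕ) = (j : ℕ) + 1 then 1 else 0

/-- Elements of a subgroup closure are differences of monoid closure elements. -/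
lemma companion_aux_diff_of_subgroup {S : Set ℤ} {x : ℤ} (hx : x ∈ AddSubgroup.closure S) :
    ∃ a ∈ AddSubmonoid.closure S, ∃ b ∈ AddSubmonoid.closure S, x = a - b := by
  induction hx using AddSubgroup.closure_induction with
  | mem y hy => exact ⟨y, AddSubmonoid.subset_closure hy, 0, zero_mem _, by ring⟩
  | zero => exact ⟨0, zero_mem _, 0, zero_mem _, by ring⟩
  | add x y _ _ hx hy =>
      obtain ⟨a, ha, b, hb, rfl⟩ := hx
      obtain ⟨c, hc, d, hd, rfl⟩ := hy
      exact ⟨a + c, add_mem ha hc, b + d, add_mem hb hd, by ring⟩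
  | neg x _ hx =>
      obtain ⟨a, ha, b, hb, rfl⟩ := hx
      exact ⟨b, hb, a, ha, by ring⟩

/-- From a finset of naturals with gcd one, get `a = b + 1` in its additive closure. -/
lemma companion_aux_exists_succ_mem (S : Finset ℕ) (hgcd : S.gcd id = 1) :
    ∃ a ∈ AddSubmonoid.closure (S : Set ℕ), ∃ b ∈ AddSubmonoid.closure (S : Set ℕ),
      a = b + 1 := by
  set T : Set ℤ := (Nat.cast : ℕ → ℤ) '' (S : Set ℕ) with hT
  have h1 : (1 : ℤ) ∈ AddSubgroup.closure T := by
    obtain ⟨g, hg⟩ := Int.subgroup_cyclic (AddSubgroup.closure T)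
    have hdvd : g.natAbs ∣ S.gcd id := by
      apply Finset.dvd_gcd
      intro s hs
      have hmem : (s : ℤ) ∈ AddSubgroup.closure T :=
        AddSubgroup.subset_closure ⟨s, hs, rfl⟩
      rw [hg, AddSubgroup.mem_closure_singleton] at hmem
      obtain ⟨n, hn⟩ := hmem
      have hdd : g ∣ (s : ℤ) := ⟨n, by rw [← hn, smul_eq_mul, mul_comm]⟩
      exact Int.natAbs_dvd_natAbs.mpr (by simpa using hdd)
    rw [hgcd, Nat.dvd_one] at hdvd
    rw [hg, AddSubgroup.mem_closure_singleton]
    rcases Int.natAbs_eq_iff.mp hdvd with h | h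
    · exact ⟨1, by simp [h]⟩
    · exact ⟨-1, by simp [h]⟩
  obtain ⟨a, ha, b, hb, hab⟩ := companion_aux_diff_of_subgroup h1
  have hmap : AddSubmonoid.closure T =
      (AddSubmonoid.closure (S : Set ℕ)).map (Nat.castAddMonoidHom ℤ) := by
    rw [AddMonoidHom.map_mclosure]; rfl
  rw [hmap] at ha hb
  obtain ⟨a', ha', rfl⟩ := ha
  obtain ⟨b', hb', rfl⟩ := hb
  refine ⟨a', ha', b', hb', ?_⟩
  have : (a' : ℤ) = b' + 1 := by
    simp only [Nat.castAddMonoidHom, AddMonoidHom.coe_mk, ZeroHom.coe_mk] at hab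
    omega
  exact_mod_cast this

/-- Numerical semigroup: all sufficiently large naturals lie in the closure. -/
lemma companion_aux_all_large_mem (S : Finset ℕ) (hgcd : S.gcd id = 1) :
    ∃ N : ℕ, ∀ n ≥ N, n ∈ AddSubmonoid.closure (S : Set ℕ) := by
  obtain ⟨a, ha, b, hb, hab⟩ := companion_aux_exists_succ_mem S hgcd
  refine ⟨b * b, fun n hn => ?_⟩
  rcases Nat.eq_zero_or_pos b with rfl | hbpos
  · subst hab
    have := nsmul_mem ha n
    simpa using this
  · set q := n / b with hq'
    set r := n % b with hr'
    have hr : r < b := Nat.mod_lt _ hbpos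
    have hq : b ≤ q := (Nat.le_div_iff_mul_le hbpos).mpr hn
    have h2 : r ≤ q := le_trans (le_of_lt hr) hq
    have hle : r * b ≤ q * b := Nat.mul_le_mul_right b h2
    have key : n = (q - r) * b + r * a := by
      subst hab
      have h3 : (q - r) * b + r * (b + 1) = (q * b - r * b) + (r * b + r) := by
        rw [Nat.sub_mul]; ring_nf
      have h4 : (q * b - r * b) + (r * b + r) = q * b + r := by omega
      have h5 : q * b + r = n := by rw [hq', hr', mul_comm]; exact Nat.div_add_mod n b
      rw [h3, h4]
      omega
    rw [key]
    refine add_mem ?_ ?_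
    · rw [← smul_eq_mul]; exact nsmul_mem hb _
    · rw [← smul_eq_mul]; exact nsmul_mem ha _

lemma companion_aux_nonneg {p : ℕ} {α : Fin p → ℝ} (hα : ∀ i, α i ∈ Set.Icc (0 : ℝ) 1)
    (i j : Fin p) : 0 ≤ companion p α i j := by
  simp only [companion, Matrix.of_apply]
  split_ifs
  · exact (hα j).1
  · norm_num
  · exact le_refl 0

lemma companion_aux_pow_nonneg {p : ℕ} {α : Fin p → ℝ} (hα : ∀ i, α i ∈ Set.Icc (0 : ℝ) 1)
    (k : ℕ) (i j : Fin p) : 0 ≤ (companion p α ^ k) i j := by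
  induction k generalizing i j with
  | zero => rw [pow_zero]; by_cases h : i = j <;> simp [Matrix.one_apply, h]
  | succ k ih =>
      rw [pow_succ, Matrix.mul_apply]
      exact Finset.sum_nonneg fun l _ => mul_nonneg (ih i l) (companion_aux_nonneg hα l j)

lemma companion_aux_compose {p : ℕ} {α : Fin p → ℝ} (hα : ∀ i, α i ∈ Set.Icc (0 : ℝ) 1)
    {m n : ℕ} {i j l : Fin p}
    (h1 : 0 < (companion p α ^ m) i j) (h2 : 0 < (companion p α ^ n) j l) :
    0 < (companion p α ^ (m + n)) i l := by
  rw [pow_add, Matrix.mul_apply]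
  refine Finset.sum_pos' (fun t _ => mul_nonneg (companion_aux_pow_nonneg hα m i t)
    (companion_aux_pow_nonneg hα n t l)) ⟨j, Finset.mem_univ j, mul_pos h1 h2⟩

lemma companion_aux_descent {p : ℕ} {α : Fin p → ℝ} (hα : ∀ i, α i ∈ Set.Icc (0 : ℝ) 1) :
    ∀ (m : ℕ) (a b : Fin p), (a : ℕ) = (b : ℕ) + m → 0 < (companion p α ^ m) a b := by
  intro m
  induction m with
  | zero =>
      intro a b h
      have : a = b := Fin.ext (by omega)
      subst this
      simp [Matrix.one_apply]
  | succ m ih =>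
      intro a b h
      have hc : (b : ℕ) + m < p := by have := a.isLt; omega
      set c : Fin p := ⟨(b : ℕ) + m, hc⟩ with hcdef
      have h1 : 0 < (companion p α ^ 1) a c := by
        rw [pow_one]
        simp only [companion, Matrix.of_apply]
        rw [if_neg (by omega), if_pos (by omega)]
        norm_num
      have h2 : 0 < (companion p α ^ m) c b := ih c b (by simp [hcdef])
      have := companion_aux_compose hα h1 h2
      rwa [show 1 + m = m + 1 by omega] at this

/-- if `α_p > 0` and the gcd of `{i : α_i > 0}` (with `1`-based indices)
equals `1`, then the companion matrix is primitive: some power has all entries positive. -/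
theorem companion_primitive
    (p : ℕ) (hp : 0 < p) (α : Fin p → ℝ)
    (hα : ∀ i, α i ∈ Set.Icc (0 : ℝ) 1)
    (hαp : 0 < α ⟨p - 1, by omega⟩)
    (hgcd : (Finset.univ.filter fun i : Fin p => 0 < α i).gcd
        (fun i => (i : ℕ) + 1) = 1) :
    ∃ k : ℕ, 0 < k ∧ ∀ i j : Fin p, 0 < (companion p α ^ k) i j := by
  classical
  set A := companion p α with hA
  set z : Fin p := ⟨0, hp⟩ with hz
  set last : Fin p := ⟨p - 1, by omega⟩ with hlast
  -- the set of cycle lengths through 0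
  set S : Finset ℕ :=
    (Finset.univ.filter fun i : Fin p => 0 < α i).image (fun i : Fin p => (i : ℕ) + 1) with hS
  have hSgcd : S.gcd id = 1 := by
    rw [hS, ← Finset.gcd_eq_gcd_image]
    exact hgcd
  -- jump from 0 to any i with α i > 0
  have hjump : ∀ i : Fin p, 0 < α i → 0 < (A ^ 1) z i := by
    intro i hi
    rw [pow_one, hA]
    simp only [companion, Matrix.of_apply, hz]
    simpa using hi
  -- the set of n with (A^n) z z > 0 is an additive submonoid
  set M : AddSubmonoid ℕ :=
    { carrier := {n | 0 < (A ^ n) z z}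
      zero_mem' := by simp [Matrix.one_apply]
      add_mem' := fun ha hb => companion_aux_compose hα ha hb } with hM
  have hSM : AddSubmonoid.closure (S : Set ℕ) ≤ M := by
    rw [AddSubmonoid.closure_le]
    intro n hn
    simp only [hS, Finset.coe_image, Set.mem_image, Finset.mem_coe,
      Finset.mem_filter, Finset.mem_univ, true_and] at hn
    obtain ⟨i, hi, rfl⟩ := hn
    have h1 : 0 < (A ^ 1) z i := hjump i hi
    have h2 : 0 < (A ^ (i : ℕ)) i z :=
      companion_aux_descent hα (i : ℕ) i z (by simp [hz])
    show 0 < (A ^ ((i : ℕ) + 1)) z z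
    have := companion_aux_compose hα h1 h2
    rwa [show 1 + (i : ℕ) = (i : ℕ) + 1 by omega] at this
  obtain ⟨N, hN⟩ := companion_aux_all_large_mem S hSgcd
  refine ⟨N + 2 * p, by omega, fun i j => ?_⟩
  have hi := i.isLt
  have hj := j.isLt
  -- go i → z in i steps
  have h1 : 0 < (A ^ (i : ℕ)) i z :=
    companion_aux_descent hα (i : ℕ) i z (by simp [hz])
  -- loop at z for n steps
  set n : ℕ := N + p + (j : ℕ) - (i : ℕ) with hn
  have h2 : 0 < (A ^ n) z z := hSM (hN n (by omega))
  -- jump z → last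
  have h3 : 0 < (A ^ 1) z last := hjump last hαp
  -- descend last → j
  have h4 : 0 < (A ^ (p - 1 - (j : ℕ))) last j :=
    companion_aux_descent hα (p - 1 - (j : ℕ)) last j (by simp [hlast]; omega)
  have h5 := companion_aux_compose hα (companion_aux_compose hα
    (companion_aux_compose hα h1 h2) h3) h4
  rwa [show (i : ℕ) + n + 1 + (p - 1 - (j : ℕ)) = N + 2 * p by omega] at h5

end
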